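/- In S_{2n} with θ(x) = w₀ x w₀ where w₀ : i ↦ 2n+1−i, the map x ↦ w₀ x is a bijection from the set F_{2n} of fixed-point-free involutions to the set of twisted identities ι(θ) = { θ(w⁻¹)w : w ∈ S_{2n} }. -/
import Mathlib


open Equiv

/-- A fixed-point-free involution of `Fin m`. -/
def IsFpfInvolution {m : ℕ} (u : Equiv.Perm (Fin m)) : Prop :=
  u * u = 1 ∧ ∀ i, u i ≠ i

/-- The number of inversions of a permutation (its Coxeter length). -/
def invCount {m : ℕ} (u : Equiv.Perm (Fin m)) : ℕ :=
  (Finset.univ.filter (fun p : Fin m × Fin m => p.1 < p.2 ∧ u p.2 < u p.1)).card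

/-- One step in the Bruhat order: right multiplication by a transposition
which increases the length. -/
def BruhatStep {m : ℕ} (x y : Equiv.Perm (Fin m)) : Prop :=
  (∃ a b : Fin m, a ≠ b ∧ y = x * Equiv.swap a b) ∧ invCount x < invCount y

/-- The Bruhat order on the symmetric group. -/
def BruhatLE {m : ℕ} (x y : Equiv.Perm (Fin m)) : Prop :=
  Relation.ReflTransGen BruhatStep x y

/-- The dual of the Bruhat order (restricted to fixed-point-free involutions,
this is the order `⪯` with minimum element `w₀`). -/
def DualLE {m : ℕ} (x y : Equiv.Perm (Fin m)) : Prop := BruhatLE y x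

/-- Strict version of `DualLE`. -/
def DualLT {m : ℕ} (x y : Equiv.Perm (Fin m)) : Prop := BruhatLE y x ∧ x ≠ y

lemma rev_ne {n : ℕ} (i : Fin (2*n)) : Fin.rev i ≠ i := by
  intro h
  have := congrArg Fin.val h
  rw [Fin.val_rev] at this
  omega

lemma revPerm_sq {n : ℕ} : (Fin.revPerm : Perm (Fin (2*n))) * Fin.revPerm = 1 := by
  ext i; simp [Equiv.Perm.mul_apply]

lemma revPerm_fpf {n : ℕ} : IsFpfInvolution (Fin.revPerm : Perm (Fin (2*n))) :=
  ⟨revPerm_sq, fun i => rev_ne i⟩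

lemma fpf_cycleType {n : ℕ} {u : Perm (Fin (2*n))} (h : IsFpfInvolution u) :
    u.cycleType = Multiset.replicate n 2 := by
  obtain ⟨h1, h2⟩ := h
  have hord : orderOf u ∣ 2 := orderOf_dvd_of_pow_eq_one (by rw [pow_two]; exact h1)
  have hall : ∀ x ∈ u.cycleType, x = 2 := by
    intro x hx
    have h2le := Equiv.Perm.two_le_of_mem_cycleType hx
    have hdvd : x ∣ orderOf u := by
      rw [← Equiv.Perm.lcm_cycleType]; exact Multiset.dvd_lcm hx
    have hle := Nat.le_of_dvd two_pos (hdvd.trans hord)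
    omega
  have hrep : u.cycleType = Multiset.replicate (Multiset.card u.cycleType) 2 :=
    Multiset.eq_replicate_card.mpr hall
  have hsupp : u.support = Finset.univ := by
    ext i; simp [Equiv.Perm.mem_support, h2 i]
  have hsum : u.cycleType.sum = 2 * n := by
    rw [Equiv.Perm.sum_cycleType, hsupp]; simp
  rw [hrep] at hsum ⊢
  rw [Multiset.sum_replicate, smul_eq_mul] at hsum
  congr 1
  omega

/-- in `S_{2n}` with `θ(x) = w₀ x w₀`, the map `x ↦ w₀ x` is a
bijection from the fixed-point-free involutions onto the twisted identities
`ι(θ) = { θ(w⁻¹) w : w ∈ S_{2n} }`. -/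
theorem revPerm_mul_bijOn_twisted_identities {n : ℕ} :
    Set.BijOn (fun u : Equiv.Perm (Fin (2 * n)) => (Fin.revPerm : Equiv.Perm (Fin (2 * n))) * u)
      {u : Equiv.Perm (Fin (2 * n)) | IsFpfInvolution u}
      {u : Equiv.Perm (Fin (2 * n)) | ∃ w : Equiv.Perm (Fin (2 * n)),
        u = (Fin.revPerm * w⁻¹ * Fin.revPerm) * w} := by
  refine ⟨?_, ?_, ?_⟩
  · intro u hu
    have hconj : IsConj (Fin.revPerm : Perm (Fin (2*n))) u := by
      rw [Equiv.Perm.isConj_iff_cycleType_eq, fpf_cycleType revPerm_fpf, fpf_cycleType hu]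
    obtain ⟨c, hc⟩ := isConj_iff.mp hconj
    refine ⟨c⁻¹, ?_⟩
    simp only [inv_inv]
    rw [← hc]
    group
  · intro u hu v hv h
    simpa using congrArg (fun x => (Fin.revPerm : Perm (Fin (2*n)))⁻¹ * x) h
  · rintro v ⟨w, rfl⟩
    refine ⟨w⁻¹ * Fin.revPerm * w, ⟨?_, ?_⟩, ?_⟩
    · have := revPerm_sq (n := n)
      calc (w⁻¹ * Fin.revPerm * w) * (w⁻¹ * Fin.revPerm * w)
          = w⁻¹ * (Fin.revPerm * Fin.revPerm) * w := by group
        _ = 1 := by rw [this]; group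
    · intro i h
      have : Fin.revPerm (w i) = w i := by
        have := congrArg w h
        simpa [Equiv.Perm.mul_apply] using this
      exact rev_ne (w i) this
    · show Fin.revPerm * (w⁻¹ * Fin.revPerm * w) = _
      group
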